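/- Let s be a list of natural numbers with C(s) = 1 that is not a well-formed expression. Then there exists k with 0 < k < length s such that the k-rotation of s is a well-formed expression; i.e., every list that is a permutation of a well-formed expression but is not itself well-formed is a nontrivial rotation of a well-formed expression. -/

import Mathlib

/-- `C v` is the length of `v` minus the sum of its entries. -/
def C (v : List ℕ) : ℤ := (v.length : ℤ) - (v.sum : ℤ)

/-- A list of natural numbers is a well-formed expression (Polish notation
encoding of an ordered rooted tree by outdegrees) if it is of the form
`d :: (w₁ ++ ⋯ ++ w_d)` where each `wᵢ` is a well-formed expression. -/
inductive IsWF : List ℕ → Prop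
  | node (d : ℕ) (ws : List (List ℕ)) (hlen : ws.length = d)
      (h : ∀ w ∈ ws, IsWF w) : IsWF (d :: ws.flatten)

/-- The `k`-rotation of `s = u ++ v` with `v` of length `k` is `v ++ u`. -/
def krot (k : ℕ) (s : List ℕ) : List ℕ :=
  s.drop (s.length - k) ++ s.take (s.length - k)

lemma C_append (u v : List ℕ) : C (u ++ v) = C u + C v := by
  simp [C]; ring

lemma C_cons (a : ℕ) (t : List ℕ) : C (a :: t) = 1 - a + C t := by
  simp [C]; ring

lemma C_take_succ_le (t : List ℕ) (j : ℕ) (hj : j < t.length) :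
    C (t.take (j+1)) ≤ C (t.take j) + 1 := by
  rw [List.take_succ, List.getElem?_eq_getElem hj]
  simp only [Option.toList_some, C_append, C_cons]
  have : (0:ℤ) ≤ t[j] := Int.ofNat_nonneg _
  simp [C]

lemma C_split : ∀ (n : ℕ)
    (_IH : ∀ s : List ℕ, s.length < n → C s = 1 →
      (∀ j < s.length, C (s.take j) ≤ 0) → IsWF s)
    (d : ℕ) (t : List ℕ), t.length < n → C t = d →
      (∀ j < t.length, C (t.take j) ≤ (d:ℤ) - 1) →
      ∃ ws : List (List ℕ), ws.length = d ∧ (∀ w ∈ ws, IsWF w) ∧ ws.flatten = t := by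
  intro n IH d
  induction d with
  | zero =>
    intro t hlt hC hpre
    have ht : t = [] := by
      by_contra h
      have h0 : 0 < t.length := List.length_pos_iff.mpr h
      have := hpre 0 h0
      simp [C] at this
    subst ht; exact ⟨[], rfl, by simp, by simp⟩
  | succ d ih =>
    intro t hlt hC hpre
    have hex : ∃ j, 1 ≤ C (t.take j) := ⟨t.length, by rw [List.take_length, hC]; push_cast; omega⟩
    set j₀ := Nat.find hex with hj₀def
    have hj₀ : 1 ≤ C (t.take j₀) := Nat.find_spec hex
    have hmin : ∀ i < j₀, C (t.take i) ≤ 0 := by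
      intro i hi
      have := Nat.find_min hex hi
      omega
    have hj₀le : j₀ ≤ t.length :=
      Nat.find_le (by rw [List.take_length, hC]; push_cast; omega)
    have hj₀pos : 0 < j₀ := by
      rcases Nat.eq_zero_or_pos j₀ with h | h
      · rw [h] at hj₀; simp [C] at hj₀
      · exact h
    have hCp : C (t.take j₀) = 1 := by
      have hlt' : j₀ - 1 < t.length := by omega
      have hstep := C_take_succ_le t (j₀ - 1) hlt'
      have := hmin (j₀ - 1) (by omega)
      have heq : j₀ - 1 + 1 = j₀ := by omega
      rw [heq] at hstep
      omega
    set p := t.take j₀ with hpdef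
    set r := t.drop j₀ with hrdef
    have hplen : p.length = j₀ := by simp [hpdef]; omega
    have htpr : p ++ r = t := List.take_append_drop j₀ t
    have hCr : C r = d := by
      have := C_append p r
      rw [htpr] at this
      rw [hC, hCp] at this
      push_cast at this ⊢
      omega
    have hpWF : IsWF p := by
      apply IH p (by omega) hCp
      intro j hj
      rw [hplen] at hj
      have : p.take j = t.take j := by
        rw [hpdef, List.take_take]
        congr 1
        omega
      rw [this]
      exact hmin j hj
    obtain ⟨ws, hwlen, hwWF, hwfl⟩ := ih r (by simp [hrdef]; omega) hCr (by
      intro j hj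
      have hjlen : j₀ + j < t.length := by
        simp [hrdef] at hj; omega
      have hkey : t.take (j₀ + j) = p ++ r.take j := List.take_add (l := t) (i := j₀) (j := j)
      have := hpre (j₀ + j) hjlen
      rw [hkey, C_append, hCp] at this
      push_cast at this ⊢
      omega)
    refine ⟨p :: ws, by simp [hwlen], ?_, by simp [hwfl, htpr]⟩
    intro w hw
    rcases List.mem_cons.mp hw with h | h
    · subst h; exact hpWF
    · exact hwWF _ h

lemma wf_of_prefixes : ∀ (s : List ℕ), C s = 1 →
    (∀ j < s.length, C (s.take j) ≤ 0) → IsWF s := by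
  suffices H : ∀ n (s : List ℕ), s.length ≤ n → C s = 1 →
      (∀ j < s.length, C (s.take j) ≤ 0) → IsWF s by
    intro s; exact H s.length s le_rfl
  intro n
  induction n with
  | zero =>
    intro s hlen hC _
    have : s = [] := List.length_eq_zero_iff.mp (by omega)
    subst this; simp [C] at hC
  | succ n IH =>
    intro s hlen hC hpre
    match s with
    | [] => simp [C] at hC
    | d :: t =>
      have hCt : C t = d := by
        rw [C_cons] at hC; omega
      obtain ⟨ws, hwlen, hwWF, hwfl⟩ :=
        C_split (n+1) (fun s' h' hC' hpre' => IH s' (by omega) hC' hpre') d t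
          (by simp at hlen ⊢; omega) hCt
          (by
            intro j hj
            have := hpre (j+1) (by simp; omega)
            rw [List.take_succ_cons, C_cons] at this
            omega)
      rw [← hwfl]
      exact IsWF.node d ws hwlen hwWF

theorem stmt_6 (s : List ℕ) (hC : C s = 1) (hs : ¬ IsWF s) :
    ∃ k : ℕ, 0 < k ∧ k < s.length ∧ IsWF (krot k s) := by
  set n := s.length with hn
  have hn0 : 0 < n := by
    rcases Nat.eq_zero_or_pos n with h | h
    · have : s = [] := List.length_eq_zero_iff.mp (by omega)
      subst this; simp [C] at hC
    · exact h
  set g : ℕ → ℤ := fun j => C (s.take j) with hg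
  have hgn : g n = 1 := by simp only [hg, hn, List.take_length]; exact hC
  have hg0 : g 0 = 0 := by simp [hg, C]
  obtain ⟨m, hmle, hmax, hstrict⟩ :
      ∃ m, m ≤ n ∧ (∀ i ≤ n, g i ≤ g m) ∧ (∀ i < m, g i < g m) := by
    have hexP : ∃ m, m ≤ n ∧ ∀ i ≤ n, g i ≤ g m := by
      obtain ⟨m, hm, hmax⟩ := Finset.exists_max_image (Finset.range (n+1)) g
        ⟨0, by simp⟩
      refine ⟨m, by have := Finset.mem_range.mp hm; omega, fun i hi => ?_⟩
      exact hmax i (Finset.mem_range.mpr (by omega))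
    refine ⟨Nat.find hexP, (Nat.find_spec hexP).1, (Nat.find_spec hexP).2, ?_⟩
    intro i hi
    by_contra hcon
    push_neg at hcon
    have hPi : i ≤ n ∧ ∀ j ≤ n, g j ≤ g i :=
      ⟨by have := (Nat.find_spec hexP).1; omega,
       fun j hj => le_trans ((Nat.find_spec hexP).2 j hj) hcon⟩
    exact Nat.find_min hexP hi hPi
  have hm1 : 1 ≤ m := by
    rcases Nat.eq_zero_or_pos m with h | h
    · exfalso
      have := hmax n le_rfl
      rw [hgn, h, hg0] at this
      omega
    · exact h
  have hmn : m < n := by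
    rcases lt_or_eq_of_le hmle with h | h
    · exact h
    · exfalso
      apply hs
      apply wf_of_prefixes s hC
      intro j hj
      have := hstrict j (by omega)
      rw [h, hgn] at this
      have : g j ≤ 0 := by omega
      exact this
  refine ⟨n - m, by omega, by omega, ?_⟩
  have hsub : s.length - (n - m) = m := by omega
  rw [krot, hsub]
  set t := s.drop m ++ s.take m with htdef
  have hdlen : (s.drop m).length = n - m := by simp [hn]
  have htlen : t.length = n := by simp [htdef, hn]; omega
  have hCdrop : C (s.drop m) = 1 - g m := by
    have := C_append (s.take m) (s.drop m)
    rw [List.take_append_drop, hC] at this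
    simp only [hg]
    omega
  have hCt : C t = 1 := by
    rw [htdef, C_append, hCdrop]
    simp only [hg]
    omega
  apply wf_of_prefixes t hCt
  intro j hj
  rw [htlen] at hj
  by_cases hcase : j ≤ n - m
  · have h1 : t.take j = (s.drop m).take j := by
      rw [htdef, List.take_append]
      have : j - (s.drop m).length = 0 := by omega
      rw [this]
      simp
    have h2 : s.take (m + j) = s.take m ++ (s.drop m).take j := List.take_add (l := s) (i := m) (j := j)
    have h3 : g (m + j) = g m + C ((s.drop m).take j) := by
      simp only [hg]
      rw [h2, C_append]
    have h4 := hmax (m + j) (by omega)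
    rw [h1]
    omega
  · push_neg at hcase
    set i := j - (n - m) with hidef
    have hilt : i < m := by omega
    have h1 : t.take j = s.drop m ++ s.take i := by
      rw [htdef, List.take_append]
      congr 1
      · exact List.take_of_length_le (by omega)
      · rw [List.take_take]
        congr 1
        rw [hdlen]
        omega
    have h2 := hstrict i hilt
    rw [h1, C_append, hCdrop]
    simp only [hg] at h2 ⊢
    omega
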